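/- (Buchberger's criterion, commutative power series case.) Let k be a finite field, R = k[[x_1, …, x_n]], and let ⪯ be an additive total order on ℕⁿ. Suppose I is a nonzero ideal of R and G = (g_1, …, g_s) is a tuple of nonzero elements of I generating I as an ideal. Then G is a Gröbner basis for I if and only if for all 1 ≤ i, j ≤ s the remainder of the S-element S(g_i, g_j) on division by G is zero. -/

import Mathlib

/-- The support of a multivariate power series: the set of exponents with nonzero
coefficient. -/
def psupp {n : ℕ} {k : Type*} [Semiring k] (f : MvPowerSeries (Fin n) k) :
    Set (Fin n →₀ ℕ) :=
  {α | MvPowerSeries.coeff α f ≠ 0}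

/-- `IsLM le f μ` says that `μ` is the least monomial `LM(f)` of `f` with respect to the
order `le`: `μ` lies in the support of `f` and is `le`-smaller than every element of the
support.  (In particular this forces `f ≠ 0`.) -/
def IsLM {n : ℕ} {k : Type*} [Semiring k] (le : (Fin n →₀ ℕ) → (Fin n →₀ ℕ) → Prop)
    (f : MvPowerSeries (Fin n) k) (μ : Fin n →₀ ℕ) : Prop :=
  μ ∈ psupp f ∧ ∀ ν ∈ psupp f, le μ ν

/-- `le` is an additive total order on `ℕⁿ`: a total order such that `0 ⪯ α` for all `α`,
and `α ⪯ β` implies `α + γ ⪯ β + γ`.  (Every such order is a well-order.) -/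
structure IsAdditiveTotalOrder {n : ℕ} (le : (Fin n →₀ ℕ) → (Fin n →₀ ℕ) → Prop) : Prop where
  total : ∀ α β, le α β ∨ le β α
  antisymm : ∀ α β, le α β → le β α → α = β
  trans : ∀ α β γ, le α β → le β γ → le α γ
  zero_le : ∀ α, le 0 α
  add_right : ∀ α β γ, le α β → le (α + γ) (β + γ)

/-- Membership in `Δ_{F,r} = (LM(f_r) + ℕⁿ) ∖ ⋃_{i<r} Δ_{F,i}`, where `μ i = LM(f_i)`.
(Unwinding the recursion, `Δ_{F,r} = (μ r + ℕⁿ) ∖ ⋃_{i<r} (μ i + ℕⁿ)`.) -/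
def InDelta {n s : ℕ} (μ : Fin s → (Fin n →₀ ℕ)) (r : Fin s) (β : Fin n →₀ ℕ) : Prop :=
  (∃ γ, β = μ r + γ) ∧ ∀ i : Fin s, i < r → ¬ ∃ γ, β = μ i + γ

/-- Membership in `Δ̄_F = ℕⁿ ∖ ⋃_{i=1}^s Δ_{F,i} = ℕⁿ ∖ ⋃_{i=1}^s (μ i + ℕⁿ)`. -/
def InDeltaBar {n s : ℕ} (μ : Fin s → (Fin n →₀ ℕ)) (β : Fin n →₀ ℕ) : Prop :=
  ∀ i : Fin s, ¬ ∃ γ, β = μ i + γ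

/-- `LM(I)`: the set of least monomials of nonzero elements of an ideal `I`. -/
def LMset {n : ℕ} {k : Type*} [Semiring k] (le : (Fin n →₀ ℕ) → (Fin n →₀ ℕ) → Prop)
    (I : Ideal (MvPowerSeries (Fin n) k)) : Set (Fin n →₀ ℕ) :=
  {μ | ∃ f ∈ I, IsLM le f μ}

/-- The S-element of `g, g'` with least monomials `γ, γ'`:
`S(g, g') = LC(g)⁻¹ x^{(γ∨γ')−γ} g − LC(g')⁻¹ x^{(γ∨γ')−γ'} g'`, where `γ ∨ γ'` is the
componentwise maximum and `LC(g) = g_γ`, `LC(g') = g'_{γ'}`. -/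
noncomputable def Sel {n : ℕ} {k : Type*} [Field k]
    (g g' : MvPowerSeries (Fin n) k) (γ γ' : Fin n →₀ ℕ) : MvPowerSeries (Fin n) k :=
  (MvPowerSeries.coeff γ g)⁻¹ • (MvPowerSeries.monomial (γ ⊔ γ' - γ) (1 : k) * g)
    - (MvPowerSeries.coeff γ' g')⁻¹ • (MvPowerSeries.monomial (γ ⊔ γ' - γ') (1 : k) * g')

namespace S17

variable {n : ℕ} {le : (Fin n →₀ ℕ) → (Fin n →₀ ℕ) → Prop}

def Lt (le : (Fin n →₀ ℕ) → (Fin n →₀ ℕ) → Prop) (α β : Fin n →₀ ℕ) : Prop :=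
  le α β ∧ α ≠ β

section order
variable (hle : IsAdditiveTotalOrder le)
include hle

lemma le_refl (α : Fin n →₀ ℕ) : le α α := (hle.total α α).elim id id

lemma le_mono {α β : Fin n →₀ ℕ} (h : α ≤ β) : le α β := by
  obtain ⟨γ, rfl⟩ := le_iff_exists_add.mp h
  have := hle.add_right 0 γ α (hle.zero_le γ)
  simpa [add_comm] using this

lemma le_cancel {α β γ : Fin n →₀ ℕ} (h : le (α + γ) (β + γ)) : le α β := by
  rcases hle.total α β with h' | h'
  · exact h'
  · have h2 := hle.antisymm _ _ h (hle.add_right _ _ _ h')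
    rw [add_right_cancel h2]
    exact le_refl hle β

lemma lt_add {α β : Fin n →₀ ℕ} (γ : Fin n →₀ ℕ) (h : Lt le α β) : Lt le (α + γ) (β + γ) :=
  ⟨hle.add_right _ _ _ h.1, fun e => h.2 (add_right_cancel e)⟩

lemma lt_of_not_le {α β : Fin n →₀ ℕ} (h : ¬ le α β) : Lt le β α := by
  rcases hle.total α β with h' | h'
  · exact absurd h' h
  · exact ⟨h', fun e => h (e ▸ le_refl hle α)⟩

lemma le_of_not_lt {α β : Fin n →₀ ℕ} (h : ¬ Lt le α β) : le β α := by
  rcases hle.total β α with h' | h'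
  · exact h'
  · by_cases e : α = β
    · exact e ▸ le_refl hle α
    · exact absurd ⟨h', e⟩ h

lemma lt_of_lt_of_le {α β γ : Fin n →₀ ℕ} (h1 : Lt le α β) (h2 : le β γ) : Lt le α γ :=
  ⟨hle.trans _ _ _ h1.1 h2, fun e => h1.2 (hle.antisymm _ _ h1.1 (e ▸ h2))⟩

lemma lt_of_le_of_lt {α β γ : Fin n →₀ ℕ} (h1 : le α β) (h2 : Lt le β γ) : Lt le α γ :=
  ⟨hle.trans _ _ _ h1 h2.1, fun e => h2.2 (hle.antisymm _ _ h2.1 (e ▸ h1))⟩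

lemma eq_of_le_of_not_lt {α β : Fin n →₀ ℕ} (h1 : le α β) (h2 : ¬ Lt le α β) : α = β := by
  by_contra hne; exact h2 ⟨h1, hne⟩

lemma wf : WellFounded (Lt le) := by
  letI : IsRefl (Fin n →₀ ℕ) le := ⟨le_refl hle⟩
  letI : IsTrans (Fin n →₀ ℕ) le := ⟨hle.trans⟩
  letI : IsPreorder (Fin n →₀ ℕ) le := ⟨⟩
  have hpwo : (Set.univ : Set (Fin n →₀ ℕ)).PartiallyWellOrderedOn le := by
    intro f
    obtain ⟨i, j, hij, hij'⟩ := Set.isPWO_of_wellQuasiOrderedLE (Set.univ : Set (Fin n →₀ ℕ)) f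
    exact ⟨i, j, hij, le_mono hle hij'⟩
  have hwf := Set.wellFoundedOn_univ.mp hpwo.wellFoundedOn
  refine Subrelation.wf (fun {a b} hab => ?_) hwf
  exact ⟨hab.1, fun hba => hab.2 (hle.antisymm _ _ hab.1 hba)⟩

lemma exists_least {S : Set (Fin n →₀ ℕ)} (hS : S.Nonempty) : ∃ m ∈ S, ∀ x ∈ S, le m x := by
  obtain ⟨m, hm, hmin⟩ := (wf hle).has_min S hS
  exact ⟨m, hm, fun x hx => le_of_not_lt hle (hmin x hx)⟩

end order

open MvPowerSeries Finset
open scoped Classical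

variable {s : ℕ} {k : Type*} [Field k]

/-- view a plain function as a power series -/
def toPS (v : (Fin n →₀ ℕ) → k) : MvPowerSeries (Fin n) k := v

lemma coeff_toPS (v : (Fin n →₀ ℕ) → k) (β : Fin n →₀ ℕ) :
    MvPowerSeries.coeff β (toPS v) = v β := rfl

section lm
variable (hle : IsAdditiveTotalOrder le)
include hle

lemma exists_isLM {f : MvPowerSeries (Fin n) k} (hf : f ≠ 0) : ∃ ν, IsLM le f ν := by
  have hne : (psupp f).Nonempty := by
    by_contra h
    rw [Set.not_nonempty_iff_eq_empty] at h
    apply hf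
    ext β
    by_contra hβ
    exact absurd (Set.eq_empty_iff_forall_notMem.mp h β) (by simpa [psupp] using hβ)
  obtain ⟨m, hm, hleast⟩ := exists_least hle hne
  exact ⟨m, hm, hleast⟩

lemma coeff_eq_zero_of_lt {f : MvPowerSeries (Fin n) k} {ν β : Fin n →₀ ℕ}
    (hLM : IsLM le f ν) (h : Lt le β ν) : MvPowerSeries.coeff β f = 0 := by
  by_contra hc
  exact (lt_of_lt_of_le hle h (hLM.2 β hc)).2 rfl

lemma isLM_monomial_mul {f : MvPowerSeries (Fin n) k} {ν : Fin n →₀ ℕ}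
    (hLM : IsLM le f ν) (γ : Fin n →₀ ℕ) :
    IsLM le (MvPowerSeries.monomial γ 1 * f) (γ + ν) := by
  constructor
  · show MvPowerSeries.coeff (γ + ν) _ ≠ 0
    rw [coeff_monomial_mul, if_pos (le_iff_exists_add.mpr ⟨ν, rfl⟩), add_tsub_cancel_left,
      one_mul]
    exact hLM.1
  · intro β hβ
    have hβ' : MvPowerSeries.coeff β (MvPowerSeries.monomial γ 1 * f) ≠ 0 := hβ
    rw [coeff_monomial_mul] at hβ'
    split_ifs at hβ' with hc
    · rw [one_mul] at hβ'
      have h2 := hLM.2 _ hβ'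
      have h3 := hle.add_right _ _ γ h2
      rw [tsub_add_cancel_of_le hc] at h3
      simpa [add_comm] using h3
    · exact absurd rfl hβ'

end lm

/-- the index of the region `Δ_l` containing `β` (or `⊤` for `Δ̄`) -/
noncomputable def reg (μ : Fin s → (Fin n →₀ ℕ)) (β : Fin n →₀ ℕ) : WithTop (Fin s) :=
  (Finset.univ.filter fun l => μ l ≤ β).min

variable {μ : Fin s → (Fin n →₀ ℕ)}

lemma reg_le {β : Fin n →₀ ℕ} {l : Fin s} (h : reg μ β = (l : WithTop (Fin s))) : μ l ≤ β := by
  have := Finset.mem_of_min h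
  simpa using this

lemma reg_min {β : Fin n →₀ ℕ} {l : Fin s} (h : reg μ β = (l : WithTop (Fin s)))
    {i : Fin s} (hi : i < l) : ¬ μ i ≤ β := by
  intro hc
  have h2 : reg μ β ≤ (i : WithTop (Fin s)) := Finset.min_le (by simpa using hc)
  rw [h] at h2
  exact absurd (WithTop.coe_le_coe.mp h2) (not_le.mpr hi)

lemma inDelta_iff_reg {β : Fin n →₀ ℕ} {l : Fin s} :
    InDelta μ l β ↔ reg μ β = (l : WithTop (Fin s)) := by
  constructor
  · rintro ⟨⟨γ, hγ⟩, h2⟩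
    have hl : μ l ≤ β := le_iff_exists_add.mpr ⟨γ, hγ⟩
    have hmem : l ∈ Finset.univ.filter fun l' => μ l' ≤ β := by simpa using hl
    obtain ⟨m, hm⟩ := Finset.min_of_mem hmem
    have hml : m ≤ l := by
      have := Finset.min_le hmem
      rw [hm] at this
      exact WithTop.coe_le_coe.mp this
    rcases lt_or_eq_of_le hml with hlt | hEq
    · exact absurd (le_iff_exists_add.mp (reg_le hm)) (fun hc => h2 m hlt hc)
    · rw [hEq] at hm; exact hm
  · intro h
    exact ⟨le_iff_exists_add.mp (reg_le h),
      fun i hi hex => reg_min h hi (le_iff_exists_add.mpr hex)⟩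

lemma inDeltaBar_iff_reg {β : Fin n →₀ ℕ} : InDeltaBar μ β ↔ reg μ β = ⊤ := by
  rw [reg, Finset.min_eq_top, Finset.filter_eq_empty_iff]
  constructor
  · intro h l _
    exact fun hc => h l (le_iff_exists_add.mp hc)
  · intro h i hex
    exact h (Finset.mem_univ i) (le_iff_exists_add.mpr hex)

lemma inDelta_unique {β : Fin n →₀ ℕ} {l l' : Fin s} (h : InDelta μ l β) (h' : InDelta μ l' β) :
    l = l' := by
  have h1 := inDelta_iff_reg.mp h
  have h2 := inDelta_iff_reg.mp h'
  exact WithTop.coe_inj.mp (h1 ▸ h2)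


section division

variable (hle : IsAdditiveTotalOrder le) (g : Fin s → MvPowerSeries (Fin n) k)
  (μ : Fin s → (Fin n →₀ ℕ))
include hle

/-- coefficient function of Hironaka division -/
noncomputable def divC (f : MvPowerSeries (Fin n) k) : (Fin n →₀ ℕ) → k :=
  (wf hle).fix fun β rec =>
    MvPowerSeries.coeff β f -
      ∑ l : Fin s, ∑ p ∈ Finset.HasAntidiagonal.antidiagonal β,
        if h : reg μ (μ l + p.1) = (l : WithTop (Fin s)) ∧ Lt le (μ l + p.1) β then
          (MvPowerSeries.coeff (μ l) (g l))⁻¹ * rec (μ l + p.1) h.2 *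
            MvPowerSeries.coeff p.2 (g l)
        else 0

lemma divC_eq (f : MvPowerSeries (Fin n) k) (β : Fin n →₀ ℕ) :
    divC hle g μ f β =
      MvPowerSeries.coeff β f -
        ∑ l : Fin s, ∑ p ∈ Finset.HasAntidiagonal.antidiagonal β,
          if reg μ (μ l + p.1) = (l : WithTop (Fin s)) ∧ Lt le (μ l + p.1) β then
            (MvPowerSeries.coeff (μ l) (g l))⁻¹ * divC hle g μ f (μ l + p.1) *
              MvPowerSeries.coeff p.2 (g l)
          else 0 := by
  conv_lhs => rw [divC, WellFounded.fix_eq]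
  simp only [dite_eq_ite]
  rfl

theorem division (hμ : ∀ i, IsLM le (g i) (μ i)) (f : MvPowerSeries (Fin n) k) :
    ∃ (q : Fin s → MvPowerSeries (Fin n) k) (r : MvPowerSeries (Fin n) k),
      f = ∑ l, q l * g l + r ∧
      (∀ l, ∀ β ∈ psupp (q l), InDelta μ l (β + μ l)) ∧
      (∀ β ∈ psupp r, InDeltaBar μ β) := by
  set c := divC hle g μ f with hcdef
  set q : Fin s → MvPowerSeries (Fin n) k := fun l => toPS (fun δ =>
    if reg μ (μ l + δ) = (l : WithTop (Fin s)) then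
      (MvPowerSeries.coeff (μ l) (g l))⁻¹ * c (μ l + δ) else 0) with hq
  set r : MvPowerSeries (Fin n) k := toPS (fun β => if reg μ β = ⊤ then c β else 0) with hr
  have hLC : ∀ l, MvPowerSeries.coeff (μ l) (g l) ≠ 0 := fun l => (hμ l).1
  refine ⟨q, r, ?_, ?_, ?_⟩
  · apply MvPowerSeries.ext
    intro β
    rw [map_add, map_sum]
    have hql : ∀ l, MvPowerSeries.coeff β (q l * g l) =
        ∑ p ∈ Finset.HasAntidiagonal.antidiagonal β,
          (if reg μ (μ l + p.1) = (l : WithTop (Fin s)) then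
            (MvPowerSeries.coeff (μ l) (g l))⁻¹ * c (μ l + p.1) *
              MvPowerSeries.coeff p.2 (g l) else 0) := by
      intro l
      rw [MvPowerSeries.coeff_mul]
      refine Finset.sum_congr rfl fun p _ => ?_
      rw [hq, coeff_toPS, ite_mul, zero_mul]
    have hsplit : ∀ l, ∀ p ∈ Finset.HasAntidiagonal.antidiagonal β,
        (if reg μ (μ l + p.1) = (l : WithTop (Fin s)) then
          (MvPowerSeries.coeff (μ l) (g l))⁻¹ * c (μ l + p.1) *
            MvPowerSeries.coeff p.2 (g l) else 0)
        = (if reg μ (μ l + p.1) = (l : WithTop (Fin s)) ∧ Lt le (μ l + p.1) β then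
            (MvPowerSeries.coeff (μ l) (g l))⁻¹ * c (μ l + p.1) *
              MvPowerSeries.coeff p.2 (g l) else 0)
          + (if μ l + p.1 = β ∧ reg μ β = (l : WithTop (Fin s)) then
              (MvPowerSeries.coeff (μ l) (g l))⁻¹ * c β *
                MvPowerSeries.coeff p.2 (g l) else 0) := by
      intro l p hp
      rw [Finset.HasAntidiagonal.mem_antidiagonal] at hp
      by_cases h1 : reg μ (μ l + p.1) = (l : WithTop (Fin s))
      · by_cases h2 : Lt le (μ l + p.1) β
        · rw [if_pos h1, if_pos ⟨h1, h2⟩, if_neg, add_zero]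
          rintro ⟨he, _⟩; exact h2.2 he
        · by_cases h3 : μ l + p.1 = β
          · rw [if_pos h1, if_neg (fun hcc => h2 hcc.2), if_pos ⟨h3, h3 ▸ h1⟩, h3, zero_add]
          · have hg0 : MvPowerSeries.coeff p.2 (g l) = 0 := by
              by_contra hgc
              have h4 := (hμ l).2 p.2 hgc
              have h5 := hle.add_right _ _ p.1 h4
              rw [add_comm p.2 p.1, hp] at h5
              exact h3 (eq_of_le_of_not_lt hle h5 h2)
            simp [hg0, h3]
      · have hn2 : ¬ (μ l + p.1 = β ∧ reg μ β = (l : WithTop (Fin s))) := by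
          rintro ⟨he, hrc⟩; exact h1 (he ▸ hrc)
        simp [h1, hn2]
    have hsum : ∑ l, MvPowerSeries.coeff β (q l * g l)
        = (∑ l : Fin s, ∑ p ∈ Finset.HasAntidiagonal.antidiagonal β,
            if reg μ (μ l + p.1) = (l : WithTop (Fin s)) ∧ Lt le (μ l + p.1) β then
              (MvPowerSeries.coeff (μ l) (g l))⁻¹ * c (μ l + p.1) *
                MvPowerSeries.coeff p.2 (g l) else 0)
          + ∑ l : Fin s, ∑ p ∈ Finset.HasAntidiagonal.antidiagonal β,
            (if μ l + p.1 = β ∧ reg μ β = (l : WithTop (Fin s)) then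
              (MvPowerSeries.coeff (μ l) (g l))⁻¹ * c β *
                MvPowerSeries.coeff p.2 (g l) else 0) := by
      rw [← Finset.sum_add_distrib]
      refine Finset.sum_congr rfl fun l _ => ?_
      rw [hql l, ← Finset.sum_add_distrib]
      exact Finset.sum_congr rfl fun p hp => hsplit l p hp
    have hT1 : (∑ l : Fin s, ∑ p ∈ Finset.HasAntidiagonal.antidiagonal β,
        if reg μ (μ l + p.1) = (l : WithTop (Fin s)) ∧ Lt le (μ l + p.1) β then
          (MvPowerSeries.coeff (μ l) (g l))⁻¹ * c (μ l + p.1) *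
            MvPowerSeries.coeff p.2 (g l) else 0)
        = MvPowerSeries.coeff β f - c β := by
      rw [hcdef, divC_eq hle g μ f β, sub_sub_cancel]
    have hT2 : ∀ l : Fin s, (∑ p ∈ Finset.HasAntidiagonal.antidiagonal β,
        (if μ l + p.1 = β ∧ reg μ β = (l : WithTop (Fin s)) then
          (MvPowerSeries.coeff (μ l) (g l))⁻¹ * c β *
            MvPowerSeries.coeff p.2 (g l) else 0))
        = if reg μ β = (l : WithTop (Fin s)) then c β else 0 := by
      intro l
      by_cases hc : reg μ β = (l : WithTop (Fin s))
      · have hlle : μ l ≤ β := reg_le hc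
        rw [if_pos hc, Finset.sum_eq_single ((β - μ l, μ l) : (Fin n →₀ ℕ) × (Fin n →₀ ℕ))]
        · rw [if_pos ⟨add_tsub_cancel_of_le hlle, hc⟩,
            mul_comm ((MvPowerSeries.coeff (μ l)) (g l))⁻¹ (c β), mul_assoc,
            inv_mul_cancel₀ (hLC l), mul_one]
        · intro p hp hne
          rw [Finset.HasAntidiagonal.mem_antidiagonal] at hp
          rw [if_neg]
          rintro ⟨h3, _⟩
          apply hne
          have hp1 : p.1 = β - μ l := by
            rw [← h3, add_comm, add_tsub_cancel_right]
          have hp2 : p.2 = μ l := by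
            have : p.1 + p.2 = p.1 + μ l := by rw [hp, ← h3, add_comm]
            exact add_left_cancel this
          exact Prod.ext hp1 hp2
        · intro habs
          exact absurd (by simp [Finset.HasAntidiagonal.mem_antidiagonal, tsub_add_cancel_of_le hlle]) habs
      · rw [if_neg hc]
        refine Finset.sum_eq_zero fun p hp => ?_
        rw [if_neg]
        rintro ⟨_, hrc⟩
        exact hc hrc
    rw [hsum, hT1]
    have hT2' : (∑ l : Fin s, ∑ p ∈ Finset.HasAntidiagonal.antidiagonal β,
        (if μ l + p.1 = β ∧ reg μ β = (l : WithTop (Fin s)) then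
          (MvPowerSeries.coeff (μ l) (g l))⁻¹ * c β *
            MvPowerSeries.coeff p.2 (g l) else 0))
        = ∑ l : Fin s, if reg μ β = (l : WithTop (Fin s)) then c β else 0 :=
      Finset.sum_congr rfl fun l _ => hT2 l
    rw [hT2']
    have hrb : MvPowerSeries.coeff β r = if reg μ β = ⊤ then c β else 0 := by
      rw [hr, coeff_toPS]
    rw [hrb]
    by_cases htop : reg μ β = ⊤
    · have h0 : (∑ l : Fin s, if reg μ β = (l : WithTop (Fin s)) then c β else 0) = 0 :=
        Finset.sum_eq_zero fun l _ => if_neg (by simp [htop])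
      rw [h0, if_pos htop]
      ring
    · obtain ⟨l₀, hreg⟩ : ∃ l₀ : Fin s, reg μ β = (l₀ : WithTop (Fin s)) := by
        rcases hreg' : reg μ β with _ | l₀
        · exact absurd hreg' htop
        · exact ⟨l₀, rfl⟩
      have hsum0 : (∑ l : Fin s, if reg μ β = (l : WithTop (Fin s)) then c β else 0) = c β := by
        have hcong : ∀ l : Fin s, (if reg μ β = (l : WithTop (Fin s)) then c β else 0)
            = if l₀ = l then c β else 0 := by
          intro l
          rw [hreg]
          by_cases hl : l₀ = l
          · rw [if_pos (by exact_mod_cast hl), if_pos hl]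
          · rw [if_neg (by exact_mod_cast hl), if_neg hl]
        rw [Finset.sum_congr rfl fun l _ => hcong l, Finset.sum_ite_eq]
        simp
      rw [hsum0, if_neg htop]
      ring
  · intro l β hβ
    have hβ' : MvPowerSeries.coeff β (q l) ≠ 0 := hβ
    rw [hq, coeff_toPS] at hβ'
    split_ifs at hβ' with hcond
    · rw [add_comm]
      exact inDelta_iff_reg.mpr hcond
    · exact absurd rfl hβ'
  · intro β hβ
    have hβ' : MvPowerSeries.coeff β r ≠ 0 := hβ
    rw [hr, coeff_toPS] at hβ'
    split_ifs at hβ' with hcond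
    · exact inDeltaBar_iff_reg.mpr hcond
    · exact absurd rfl hβ'

end division


section key

variable (hle : IsAdditiveTotalOrder le) (g : Fin s → MvPowerSeries (Fin n) k)
  {μ : Fin s → (Fin n →₀ ℕ)} (hμ : ∀ i, IsLM le (g i) (μ i))
include hle hμ

/-- if all "slots" of a constrained combination sit strictly above σ in the support sense,
then all the quotient positions do -/
lemma combination_supp_gt {q : Fin s → MvPowerSeries (Fin n) k}
    (hq : ∀ l, ∀ δ ∈ psupp (q l), InDelta μ l (δ + μ l))
    {σ : Fin n →₀ ℕ}
    (hS : ∀ π, MvPowerSeries.coeff π (∑ l, q l * g l) ≠ 0 → Lt le σ π) :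
    ∀ m δ, MvPowerSeries.coeff δ (q m) ≠ 0 → Lt le σ (μ m + δ) := by
  intro m δ hδ
  set T : Set (Fin n →₀ ℕ) := {π | ∃ m' δ', MvPowerSeries.coeff δ' (q m') ≠ 0 ∧ π = μ m' + δ'}
    with hT
  have hTne : T.Nonempty := ⟨μ m + δ, m, δ, hδ, rfl⟩
  obtain ⟨π₀, hπ₀, hleast⟩ := exists_least hle hTne
  obtain ⟨m₀, δ₀, hδ₀, hπ₀eq⟩ := hπ₀
  have hq₀ : InDelta μ m₀ (μ m₀ + δ₀) := by
    have := hq m₀ δ₀ hδ₀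
    rwa [add_comm] at this
  -- every nonzero term of coeff π₀ (∑ q l * g l) is the diagonal one for m₀
  have hterm : ∀ l, ∀ p ∈ Finset.HasAntidiagonal.antidiagonal π₀,
      MvPowerSeries.coeff p.1 (q l) * MvPowerSeries.coeff p.2 (g l) ≠ 0 →
      l = m₀ ∧ p = (δ₀, μ m₀) := by
    intro l p hp hne
    rw [Finset.HasAntidiagonal.mem_antidiagonal] at hp
    have hq1 : MvPowerSeries.coeff p.1 (q l) ≠ 0 := left_ne_zero_of_mul hne
    have hg1 : MvPowerSeries.coeff p.2 (g l) ≠ 0 := right_ne_zero_of_mul hne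
    have hmem : μ l + p.1 ∈ T := ⟨l, p.1, hq1, rfl⟩
    have h1 : le π₀ (μ l + p.1) := hleast _ hmem
    have h2 : le (μ l + p.1) π₀ := by
      have := hle.add_right _ _ p.1 ((hμ l).2 p.2 hg1)
      rwa [add_comm p.2 p.1, hp] at this
    have heq : μ l + p.1 = π₀ := hle.antisymm _ _ h2 h1
    have hp2 : p.2 = μ l := by
      have : p.1 + p.2 = p.1 + μ l := by rw [hp, ← heq, add_comm]
      exact add_left_cancel this
    have hdl : InDelta μ l π₀ := by
      have := hq l p.1 hq1
      rwa [add_comm, heq] at this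
    have hlm : l = m₀ := inDelta_unique hdl (hπ₀eq ▸ hq₀)
    subst hlm
    have hp1 : p.1 = δ₀ := by
      apply add_left_cancel (a := μ l)
      rw [heq, hπ₀eq]
    exact ⟨rfl, Prod.ext hp1 (by rw [hp2])⟩
  have hcoeff : MvPowerSeries.coeff π₀ (∑ l, q l * g l) ≠ 0 := by
    rw [map_sum]
    have hdiag : ((δ₀ : Fin n →₀ ℕ), μ m₀) ∈ Finset.HasAntidiagonal.antidiagonal π₀ := by
      rw [Finset.HasAntidiagonal.mem_antidiagonal, add_comm, ← hπ₀eq]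
    have hsum : ∀ l : Fin s, MvPowerSeries.coeff π₀ (q l * g l) =
        if l = m₀ then MvPowerSeries.coeff δ₀ (q m₀) * MvPowerSeries.coeff (μ m₀) (g m₀)
        else 0 := by
      intro l
      rw [MvPowerSeries.coeff_mul]
      by_cases hl : l = m₀
      · subst hl
        rw [if_pos rfl]
        apply Finset.sum_eq_single_of_mem _ hdiag
        intro p hp hne
        by_contra hcon
        exact hne ((hterm l p hp hcon).2)
      · rw [if_neg hl]
        apply Finset.sum_eq_zero
        intro p hp
        by_contra hcon
        exact hl (hterm l p hp hcon).1
      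
    rw [Finset.sum_congr rfl fun l _ => hsum l, Finset.sum_ite_eq', if_pos (Finset.mem_univ _)]
    exact mul_ne_zero hδ₀ (hμ m₀).1
  have hσπ₀ : Lt le σ π₀ := hS π₀ hcoeff
  exact lt_of_lt_of_le hle hσπ₀ (hleast _ ⟨m, δ, hδ, rfl⟩)

omit hμ in
/-- the support of an S-element lies strictly above the sup of the two least monomials -/
lemma sel_supp_gt (i j : Fin s) (hμi : IsLM le (g i) (μ i)) (hμj : IsLM le (g j) (μ j)) :
    ∀ π, MvPowerSeries.coeff π (Sel (g i) (g j) (μ i) (μ j)) ≠ 0 →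
      Lt le (μ i ⊔ μ j) π := by
  intro π hπ
  set σ := μ i ⊔ μ j with hσ
  by_contra hcon
  apply hπ
  have haux : ∀ (a : Fin s), IsLM le (g a) (μ a) → ∀ (haσ : μ a ≤ σ),
      MvPowerSeries.coeff π
        ((MvPowerSeries.coeff (μ a) (g a))⁻¹ •
          (MvPowerSeries.monomial (σ - μ a) 1 * g a)) = if π = σ then 1 else 0 := by
    intro a hlma haσ
    rw [MvPowerSeries.coeff_smul, MvPowerSeries.coeff_monomial_mul]
    by_cases hπσ : π = σ
    · subst hπσ
      rw [if_pos tsub_le_self, tsub_tsub_cancel_of_le haσ, one_mul, if_pos rfl,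
        inv_mul_cancel₀ hlma.1]
    · rw [if_neg hπσ]
      split_ifs with hc
      · rw [one_mul]
        by_cases hgz : MvPowerSeries.coeff (π - (σ - μ a)) (g a) = 0
        · rw [hgz, mul_zero]
        · exfalso
          have h4 := hlma.2 _ hgz
          have h5 := hle.add_right _ _ (σ - μ a) h4
          rw [tsub_add_cancel_of_le hc, add_tsub_cancel_of_le haσ] at h5
          -- h5 : le σ π
          exact hπσ (eq_of_le_of_not_lt hle h5 hcon).symm
      · rw [mul_zero]
  rw [Sel, map_sub, haux i hμi le_sup_left, haux j hμj le_sup_right, sub_self]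

end key


section step

variable (hle : IsAdditiveTotalOrder le) (g : Fin s → MvPowerSeries (Fin n) k)
  {μ : Fin s → (Fin n →₀ ℕ)} (hμ : ∀ i, IsLM le (g i) (μ i))
include hle hμ

/-- coefficient of a constrained combination at a boundary position -/
lemma coeff_combo_at {h : Fin s → MvPowerSeries (Fin n) k} {γ : Fin n →₀ ℕ}
    (hvan : ∀ l δ, Lt le (μ l + δ) γ → MvPowerSeries.coeff δ (h l) = 0) :
    MvPowerSeries.coeff γ (∑ l, h l * g l)
      = ∑ l : Fin s, if μ l ≤ γ then
          MvPowerSeries.coeff (γ - μ l) (h l) * MvPowerSeries.coeff (μ l) (g l)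
        else 0 := by
  rw [map_sum]
  refine Finset.sum_congr rfl fun l _ => ?_
  rw [MvPowerSeries.coeff_mul]
  have hterm : ∀ p ∈ Finset.HasAntidiagonal.antidiagonal γ,
      MvPowerSeries.coeff p.1 (h l) * MvPowerSeries.coeff p.2 (g l) ≠ 0 →
      μ l + p.1 = γ ∧ p = (γ - μ l, μ l) := by
    intro p hp hne
    rw [Finset.HasAntidiagonal.mem_antidiagonal] at hp
    have hh1 : MvPowerSeries.coeff p.1 (h l) ≠ 0 := left_ne_zero_of_mul hne
    have hg1 : MvPowerSeries.coeff p.2 (g l) ≠ 0 := right_ne_zero_of_mul hne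
    have h2 : le (μ l + p.1) γ := by
      have := hle.add_right _ _ p.1 ((hμ l).2 p.2 hg1)
      rwa [add_comm p.2 p.1, hp] at this
    have heq : μ l + p.1 = γ := by
      by_contra hne'
      exact hh1 (hvan l p.1 ⟨h2, hne'⟩)
    have hp2 : p.2 = μ l := by
      have : p.1 + p.2 = p.1 + μ l := by rw [hp, ← heq, add_comm]
      exact add_left_cancel this
    have hp1 : p.1 = γ - μ l := by rw [← heq, add_comm, add_tsub_cancel_right]
    exact ⟨heq, Prod.ext hp1 hp2⟩
  by_cases hlγ : μ l ≤ γ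
  · rw [if_pos hlγ]
    apply Finset.sum_eq_single_of_mem ((γ - μ l, μ l) : (Fin n →₀ ℕ) × (Fin n →₀ ℕ))
    · rw [Finset.HasAntidiagonal.mem_antidiagonal]
      exact tsub_add_cancel_of_le hlγ
    · intro p hp hne
      by_contra hcon
      exact hne (hterm p hp hcon).2
  · rw [if_neg hlγ]
    apply Finset.sum_eq_zero
    intro p hp
    by_contra hcon
    have := (hterm p hp hcon).1
    exact hlγ (le_iff_exists_add.mpr ⟨p.1, this.symm⟩)

/-- substitute the head monomial multiple of `g l₁` using the S-element relation -/
lemma sel_substitution {q : Fin s → MvPowerSeries (Fin n) k} (l₁ l₂ : Fin s)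
    (hqe : Sel (g l₁) (g l₂) (μ l₁) (μ l₂) = ∑ m, q m * g m)
    {γ : Fin n →₀ ℕ} (h1 : μ l₁ ≤ γ) (h2 : μ l₂ ≤ γ) (a : k) :
    MvPowerSeries.monomial (γ - μ l₁) a * g l₁
      = MvPowerSeries.monomial (γ - μ l₂)
          (a * MvPowerSeries.coeff (μ l₁) (g l₁) *
            (MvPowerSeries.coeff (μ l₂) (g l₂))⁻¹) * g l₂
        + ∑ m, ((a * MvPowerSeries.coeff (μ l₁) (g l₁)) •
            (MvPowerSeries.monomial (γ - (μ l₁ ⊔ μ l₂)) 1 * q m)) * g m := by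
  set σ := μ l₁ ⊔ μ l₂ with hσ
  set LC₁ := MvPowerSeries.coeff (μ l₁) (g l₁) with hLC₁
  set LC₂ := MvPowerSeries.coeff (μ l₂) (g l₂) with hLC₂
  have hLC₁ne : LC₁ ≠ 0 := (hμ l₁).1
  have hLC₂ne : LC₂ ≠ 0 := (hμ l₂).1
  have hσγ : σ ≤ γ := sup_le h1 h2
  have hsum : (∑ m, ((a * LC₁) • (MvPowerSeries.monomial (γ - σ) 1 * q m)) * g m)
      = (a * LC₁) • (MvPowerSeries.monomial (γ - σ) 1 *
          Sel (g l₁) (g l₂) (μ l₁) (μ l₂)) := by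
    rw [hqe, Finset.mul_sum, Finset.smul_sum]
    refine Finset.sum_congr rfl fun m _ => ?_
    rw [smul_mul_assoc, mul_assoc]
  rw [hsum, Sel, mul_sub, smul_sub]
  have hmm : ∀ (b : Fin s) (hb : μ b ≤ σ),
      MvPowerSeries.monomial (γ - σ) 1 *
        ((MvPowerSeries.coeff (μ b) (g b))⁻¹ •
          (MvPowerSeries.monomial (σ - μ b) 1 * g b))
      = (MvPowerSeries.coeff (μ b) (g b))⁻¹ •
          (MvPowerSeries.monomial (γ - μ b) 1 * g b) := by
    intro b hb
    rw [mul_smul_comm, ← mul_assoc, MvPowerSeries.monomial_mul_monomial, one_mul,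
      tsub_add_tsub_cancel hσγ hb]
  rw [hmm l₁ le_sup_left, hmm l₂ le_sup_right]
  rw [smul_smul, smul_smul]
  have e1 : a * LC₁ * LC₁⁻¹ = a := by field_simp
  rw [e1]
  have e2 : (a * LC₁ * LC₂⁻¹) • (MvPowerSeries.monomial (γ - μ l₂) 1 * g l₂)
      = MvPowerSeries.monomial (γ - μ l₂) (a * LC₁ * LC₂⁻¹) * g l₂ := by
    rw [← smul_mul_assoc, ← map_smul, smul_eq_mul, mul_one]
  have e3 : a • (MvPowerSeries.monomial (γ - μ l₁) 1 * g l₁)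
      = MvPowerSeries.monomial (γ - μ l₁) a * g l₁ := by
    rw [← smul_mul_assoc, ← map_smul, smul_eq_mul, mul_one]
  rw [e2, e3]
  ring

/-- one full reduction step at position γ: from a representation with quotients vanishing
strictly below γ, produce one vanishing at γ as well (provided γ is strictly below LM f). -/
lemma step
    (hSel : ∀ i j : Fin s, ∃ q : Fin s → MvPowerSeries (Fin n) k,
      Sel (g i) (g j) (μ i) (μ j) = ∑ m, q m * g m ∧
      ∀ m, ∀ β ∈ psupp (q m), InDelta μ m (β + μ m))
    {f : MvPowerSeries (Fin n) k} {ν : Fin n →₀ ℕ} (hLM : IsLM le f ν)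
    {γ : Fin n →₀ ℕ} (hγ : Lt le γ ν) :
    ∀ (N : ℕ) (h : Fin s → MvPowerSeries (Fin n) k),
      (∑ l, h l * g l = f) →
      (∀ l δ, Lt le (μ l + δ) γ → MvPowerSeries.coeff δ (h l) = 0) →
      ((Finset.univ.filter fun l : Fin s =>
        μ l ≤ γ ∧ MvPowerSeries.coeff (γ - μ l) (h l) ≠ 0).card ≤ N) →
      ∃ h' : Fin s → MvPowerSeries (Fin n) k,
        (∑ l, h' l * g l = f) ∧
        ∀ l δ, le (μ l + δ) γ → MvPowerSeries.coeff δ (h' l) = 0 := by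
  have hfγ : MvPowerSeries.coeff γ f = 0 := coeff_eq_zero_of_lt hle hLM hγ
  intro N
  induction N with
  | zero =>
    intro h hrep hvan hcard
    rw [Nat.le_zero, Finset.card_eq_zero, Finset.filter_eq_empty_iff] at hcard
    refine ⟨h, hrep, fun l δ hld => ?_⟩
    by_cases hlt : Lt le (μ l + δ) γ
    · exact hvan l δ hlt
    · have heq : μ l + δ = γ := eq_of_le_of_not_lt hle hld hlt
      have hlγ : μ l ≤ γ := le_iff_exists_add.mpr ⟨δ, heq.symm⟩
      have hδ : δ = γ - μ l := by rw [← heq, add_comm, add_tsub_cancel_right]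
      have := hcard (Finset.mem_univ l)
      rw [not_and_or, not_not] at this
      rcases this with hc | hc
      · exact absurd hlγ hc
      · rw [hδ]; exact hc
  | succ N ih =>
    intro h hrep hvan hcard
    set L := Finset.univ.filter fun l : Fin s =>
      μ l ≤ γ ∧ MvPowerSeries.coeff (γ - μ l) (h l) ≠ 0 with hL
    by_cases hLne : L.Nonempty
    · obtain ⟨l₁, hl₁⟩ := hLne
      have hl₁' := (Finset.mem_filter.mp hl₁).2
      -- coefficient identity at γ
      have hcoeffγ : (∑ l : Fin s, if μ l ≤ γ then
          MvPowerSeries.coeff (γ - μ l) (h l) * MvPowerSeries.coeff (μ l) (g l)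
          else 0) = 0 := by
        rw [← coeff_combo_at hle g hμ hvan, hrep, hfγ]
      by_cases hL2 : ∃ l₂ ∈ L, l₂ ≠ l₁
      · obtain ⟨l₂, hl₂, hl₂ne⟩ := hL2
        have hl₂' := (Finset.mem_filter.mp hl₂).2
        obtain ⟨q, hqe, hqc⟩ := hSel l₁ l₂
        set σ := μ l₁ ⊔ μ l₂ with hσ
        set LC₁ := MvPowerSeries.coeff (μ l₁) (g l₁) with hLC₁def
        set LC₂ := MvPowerSeries.coeff (μ l₂) (g l₂) with hLC₂def
        set a := MvPowerSeries.coeff (γ - μ l₁) (h l₁) with ha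
        have hσγ : σ ≤ γ := sup_le hl₁'.1 hl₂'.1
        -- the new quotients
        set h' : Fin s → MvPowerSeries (Fin n) k := fun m =>
          h m + (if m = l₁ then -(MvPowerSeries.monomial (γ - μ l₁) a) else 0)
            + (if m = l₂ then MvPowerSeries.monomial (γ - μ l₂) (a * LC₁ * LC₂⁻¹) else 0)
            + (a * LC₁) • (MvPowerSeries.monomial (γ - σ) 1 * q m) with hh'
        -- key support bound for the q-corrections
        have hqpos : ∀ m δ', MvPowerSeries.coeff δ' (q m) ≠ 0 → Lt le σ (μ m + δ') :=
          combination_supp_gt hle g hμ hqc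
            (by rw [← hqe]; exact sel_supp_gt hle g l₁ l₂ (hμ l₁) (hμ l₂))
        have hcorr : ∀ m δ, Lt le γ (μ m + δ) ∨
            MvPowerSeries.coeff δ
              ((a * LC₁) • (MvPowerSeries.monomial (γ - σ) 1 * q m)) = 0 := by
          intro m δ
          by_cases hz : MvPowerSeries.coeff δ
              ((a * LC₁) • (MvPowerSeries.monomial (γ - σ) 1 * q m)) = 0
          · exact Or.inr hz
          · left
            rw [MvPowerSeries.coeff_smul, MvPowerSeries.coeff_monomial_mul] at hz
            split_ifs at hz with hc
            · rw [one_mul] at hz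
              have hqnz : MvPowerSeries.coeff (δ - (γ - σ)) (q m) ≠ 0 :=
                fun hzz => hz (by rw [hzz, mul_zero])
              have := lt_add hle (γ - σ) (hqpos m _ hqnz)
              rwa [add_tsub_cancel_of_le hσγ, add_assoc, tsub_add_cancel_of_le hc] at this
            · exact absurd (mul_zero _) hz
        -- the new representation
        have hrep' : ∑ l, h' l * g l = f := by
          have hsub := sel_substitution hle g hμ l₁ l₂ hqe hl₁'.1 hl₂'.1 a
          calc ∑ l, h' l * g l
              = (∑ l, h l * g l)
                + ((-(MvPowerSeries.monomial (γ - μ l₁) a)) * g l₁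
                  + (MvPowerSeries.monomial (γ - μ l₂) (a * LC₁ * LC₂⁻¹)) * g l₂
                  + ∑ m, ((a * LC₁) • (MvPowerSeries.monomial (γ - σ) 1 * q m)) * g m) := by
                rw [hh']
                simp only [add_mul, Finset.sum_add_distrib, ite_mul, zero_mul, neg_mul,
                  Finset.sum_ite_eq', Finset.mem_univ, if_true]
                ring
            _ = f := by
                rw [hσ, hLC₁def, hLC₂def]
                linear_combination hrep - hsub
        -- vanishing below γ is preserved
        have hvan' : ∀ l δ, Lt le (μ l + δ) γ → MvPowerSeries.coeff δ (h' l) = 0 := by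
          intro l δ hlt
          rw [hh']
          simp only [map_add]
          have hc1 : MvPowerSeries.coeff δ
              (if l = l₁ then -(MvPowerSeries.monomial (γ - μ l₁) a) else 0) = 0 := by
            split_ifs with he
            · subst he
              rw [map_neg, MvPowerSeries.coeff_monomial, if_neg, neg_zero]
              intro hδ
              rw [hδ, add_tsub_cancel_of_le hl₁'.1] at hlt
              exact hlt.2 rfl
            · rw [map_zero]
          have hc2 : MvPowerSeries.coeff δ
              (if l = l₂ then MvPowerSeries.monomial (γ - μ l₂) (a * LC₁ * LC₂⁻¹)
               else 0) = 0 := by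
            split_ifs with he
            · subst he
              rw [MvPowerSeries.coeff_monomial, if_neg]
              intro hδ
              rw [hδ, add_tsub_cancel_of_le hl₂'.1] at hlt
              exact hlt.2 rfl
            · rw [map_zero]
          have hc3 : MvPowerSeries.coeff δ
              ((a * LC₁) • (MvPowerSeries.monomial (γ - σ) 1 * q l)) = 0 := by
            rcases hcorr l δ with hA | hA
            · exact absurd rfl (lt_of_lt_of_le hle hA hlt.1).2
            · exact hA
          rw [hvan l δ hlt, hc1, hc2, hc3]
          ring
        -- the new head set is contained in L.erase l₁
        have hsub' : (Finset.univ.filter fun m : Fin s =>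
            μ m ≤ γ ∧ MvPowerSeries.coeff (γ - μ m) (h' m) ≠ 0) ⊆ L.erase l₁ := by
          intro m hm
          obtain ⟨-, hmγ, hmne⟩ := Finset.mem_filter.mp hm
          have hc3 : MvPowerSeries.coeff (γ - μ m)
              ((a * LC₁) • (MvPowerSeries.monomial (γ - σ) 1 * q m)) = 0 := by
            rcases hcorr m (γ - μ m) with hA | hA
            · rw [add_tsub_cancel_of_le hmγ] at hA
              exact absurd rfl hA.2
            · exact hA
          by_cases hml₁ : m = l₁
          · exfalso
            apply hmne
            rw [hml₁] at hc3 ⊢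
            rw [hh']
            have hne12 : ¬ (l₁ = l₂) := fun he => hl₂ne he.symm
            simp only [map_add, eq_self_iff_true, if_true, if_neg hne12, map_zero,
              map_neg, MvPowerSeries.coeff_monomial, hc3, ← ha]
            ring
          · refine Finset.mem_erase.mpr ⟨hml₁, ?_⟩
            by_cases hml₂ : m = l₂
            · subst hml₂; exact hl₂
            · refine Finset.mem_filter.mpr ⟨Finset.mem_univ m, hmγ, ?_⟩
              intro hz
              apply hmne
              rw [hh']
              simp only [map_add, if_neg hml₁, if_neg hml₂, map_zero, hz, hc3]
              ring
        have hcard' : (Finset.univ.filter fun m : Fin s =>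
            μ m ≤ γ ∧ MvPowerSeries.coeff (γ - μ m) (h' m) ≠ 0).card ≤ N := by
          have h1 := Finset.card_le_card hsub'
          rw [Finset.card_erase_of_mem hl₁] at h1
          omega
        exact ih h' hrep' hvan' hcard'
      · -- L = {l₁}: contradiction with hcoeffγ
        exfalso
        push_neg at hL2
        have hLsub : L = {l₁} := by
          apply Finset.eq_singleton_iff_unique_mem.mpr
          exact ⟨hl₁, fun x hx => hL2 x hx⟩
        have hsingle : (∑ l : Fin s, if μ l ≤ γ then
            MvPowerSeries.coeff (γ - μ l) (h l) * MvPowerSeries.coeff (μ l) (g l)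
            else 0) = MvPowerSeries.coeff (γ - μ l₁) (h l₁) *
              MvPowerSeries.coeff (μ l₁) (g l₁) := by
          rw [Finset.sum_eq_single_of_mem l₁ (Finset.mem_univ l₁)]
          · rw [if_pos hl₁'.1]
          · intro b _ hb
            by_cases hbγ : μ b ≤ γ
            · rw [if_pos hbγ]
              by_cases hbz : MvPowerSeries.coeff (γ - μ b) (h b) = 0
              · rw [hbz, zero_mul]
              · exfalso
                have hbL : b ∈ L := Finset.mem_filter.mpr ⟨Finset.mem_univ b, hbγ, hbz⟩
                rw [hLsub, Finset.mem_singleton] at hbL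
                exact hb hbL
            · rw [if_neg hbγ]
        rw [hsingle] at hcoeffγ
        exact hl₁'.2 (by
          rcases mul_eq_zero.mp hcoeffγ with hc | hc
          · exact hc
          · exact absurd hc (hμ l₁).1)
    · -- L empty: done directly (reuse zero-case argument)
      rw [Finset.not_nonempty_iff_eq_empty] at hLne
      refine ⟨h, hrep, fun l δ hld => ?_⟩
      by_cases hlt : Lt le (μ l + δ) γ
      · exact hvan l δ hlt
      · have heq : μ l + δ = γ := eq_of_le_of_not_lt hle hld hlt
        have hlγ : μ l ≤ γ := le_iff_exists_add.mpr ⟨δ, heq.symm⟩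
        have hδ : δ = γ - μ l := by rw [← heq, add_comm, add_tsub_cancel_right]
        by_contra hne
        have : l ∈ L := Finset.mem_filter.mpr ⟨Finset.mem_univ l, hlγ, by rw [← hδ]; exact hne⟩
        rw [hLne] at this
        exact absurd this (Finset.notMem_empty l)

end step


section compactness

variable (hle : IsAdditiveTotalOrder le)
include hle

/-- every finite nonempty set has a `le`-maximum -/
lemma exists_le_max : ∀ (A : Finset (Fin n →₀ ℕ)), A.Nonempty →
    ∃ m ∈ A, ∀ x ∈ A, le x m := by
  intro A
  induction A using Finset.induction_on with
  | empty => intro h; exact absurd h (by simp)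
  | @insert a A ha ih =>
    intro _
    by_cases hA : A.Nonempty
    · obtain ⟨m, hm, hmax⟩ := ih hA
      rcases hle.total a m with h' | h'
      · refine ⟨m, Finset.mem_insert_of_mem hm, fun x hx => ?_⟩
        rcases Finset.mem_insert.mp hx with rfl | hx
        · exact h'
        · exact hmax x hx
      · refine ⟨a, Finset.mem_insert_self _ _, fun x hx => ?_⟩
        rcases Finset.mem_insert.mp hx with rfl | hx
        · exact le_refl hle x
        · exact hle.trans _ _ _ (hmax x hx) h'
    · rw [Finset.not_nonempty_iff_eq_empty] at hA
      subst hA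
      refine ⟨a, by simp, fun x hx => ?_⟩
      rcases Finset.mem_insert.mp hx with rfl | hx
      · exact le_refl hle x
      · simp at hx

variable [Finite k] (g : Fin s → MvPowerSeries (Fin n) k)
  {μ : Fin s → (Fin n →₀ ℕ)} (hμ : ∀ i, IsLM le (g i) (μ i))
include hμ

/-- the key lemma for the hard direction: if all S-elements admit constrained
representations, then the least monomial of every element of the ideal generated by the
`g l` is divisible by some `μ l`. -/
lemma lm_in_cone
    (hSel : ∀ i j : Fin s, ∃ q : Fin s → MvPowerSeries (Fin n) k,
      Sel (g i) (g j) (μ i) (μ j) = ∑ m, q m * g m ∧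
      ∀ m, ∀ β ∈ psupp (q m), InDelta μ m (β + μ m))
    {f : MvPowerSeries (Fin n) k} {ν : Fin n →₀ ℕ}
    (hf : f ∈ Ideal.span (Set.range g)) (hLM : IsLM le f ν) :
    ∃ l : Fin s, μ l ≤ ν := by
  letI : TopologicalSpace k := ⊥
  haveI : DiscreteTopology k := ⟨rfl⟩
  haveI : CompactSpace k := Finite.compactSpace
  haveI : ContinuousMul k := ⟨continuous_of_discreteTopology⟩
  letI : TopologicalSpace (MvPowerSeries (Fin n) k) :=
    inferInstanceAs (TopologicalSpace ((Fin n →₀ ℕ) → k))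
  haveI : CompactSpace (MvPowerSeries (Fin n) k) :=
    inferInstanceAs (CompactSpace ((Fin n →₀ ℕ) → k))
  haveI : T2Space (MvPowerSeries (Fin n) k) :=
    inferInstanceAs (T2Space ((Fin n →₀ ℕ) → k))
  set RepSet : Set (Fin s → MvPowerSeries (Fin n) k) := {h | ∑ l, h l * g l = f}
    with hReps
  have hRepNe : RepSet.Nonempty := by
    obtain ⟨c0, hc0⟩ := (Ideal.mem_span_range_iff_exists_fun).mp hf
    exact ⟨c0, hc0⟩
  have hRepEq : RepSet = ⋂ β : Fin n →₀ ℕ,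
      {h | (∑ l : Fin s, ∑ p ∈ Finset.HasAntidiagonal.antidiagonal β,
        MvPowerSeries.coeff p.1 (h l) * MvPowerSeries.coeff p.2 (g l))
        = MvPowerSeries.coeff β f} := by
    ext h
    simp only [Set.mem_iInter, Set.mem_setOf_eq, hReps]
    constructor
    · intro he β
      rw [← he, map_sum]
      exact Finset.sum_congr rfl fun l _ => (MvPowerSeries.coeff_mul _ _ _).symm
    · intro hc
      apply MvPowerSeries.ext
      intro β
      rw [map_sum, ← hc β]
      exact Finset.sum_congr rfl fun l _ => MvPowerSeries.coeff_mul _ _ _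
  have hcont : ∀ (l : Fin s) (δ : Fin n →₀ ℕ),
      Continuous fun h : Fin s → MvPowerSeries (Fin n) k =>
        MvPowerSeries.coeff δ (h l) := by
    intro l δ
    simp only [MvPowerSeries.coeff_apply]
    exact (continuous_apply δ).comp (continuous_apply l)
  have hRepClosed : IsClosed RepSet := by
    rw [hRepEq]
    refine isClosed_iInter fun β => isClosed_eq ?_ continuous_const
    exact continuous_finset_sum _ fun l _ => continuous_finset_sum _ fun p _ =>
      (hcont l p.1).mul continuous_const
  have hVanClosed : ∀ γ' : Fin n →₀ ℕ, IsClosed {h : Fin s → MvPowerSeries (Fin n) k |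
      ∀ l δ, μ l + δ = γ' → MvPowerSeries.coeff δ (h l) = 0} := by
    intro γ'
    have heq : {h : Fin s → MvPowerSeries (Fin n) k |
        ∀ l δ, μ l + δ = γ' → MvPowerSeries.coeff δ (h l) = 0}
        = ⋂ (l : Fin s), ⋂ (δ : Fin n →₀ ℕ), ⋂ (_ : μ l + δ = γ'),
            {h | MvPowerSeries.coeff δ (h l) = 0} := by
      ext h
      simp only [Set.mem_iInter, Set.mem_setOf_eq]
    rw [heq]
    exact isClosed_iInter fun l => isClosed_iInter fun δ => isClosed_iInter fun _ =>
      isClosed_eq (hcont l δ) continuous_const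
  have main : ∀ γ0 : Fin n →₀ ℕ, le γ0 ν →
      ((∃ h ∈ RepSet, ∀ l δ, Lt le (μ l + δ) γ0 → MvPowerSeries.coeff δ (h l) = 0) ∧
      (Lt le γ0 ν → ∃ h ∈ RepSet, ∀ l δ, le (μ l + δ) γ0 →
        MvPowerSeries.coeff δ (h l) = 0)) := by
    intro γ0
    refine (wf hle).induction
      (C := fun γ => le γ ν →
        ((∃ h ∈ RepSet, ∀ l δ, Lt le (μ l + δ) γ → MvPowerSeries.coeff δ (h l) = 0) ∧
        (Lt le γ ν → ∃ h ∈ RepSet, ∀ l δ, le (μ l + δ) γ →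
          MvPowerSeries.coeff δ (h l) = 0)))
      γ0 ?_
    intro γ ih hγν
    have hP : ∃ h ∈ RepSet, ∀ l δ, Lt le (μ l + δ) γ →
        MvPowerSeries.coeff δ (h l) = 0 := by
      by_contra hcon
      have hempty : (RepSet ∩ ⋂ γ' : {x : Fin n →₀ ℕ // Lt le x γ},
          {h : Fin s → MvPowerSeries (Fin n) k |
            ∀ l δ, μ l + δ = γ'.1 → MvPowerSeries.coeff δ (h l) = 0}) = ∅ := by
        rw [Set.eq_empty_iff_forall_notMem]
        intro h hh
        apply hcon
        refine ⟨h, hh.1, fun l δ hlt => ?_⟩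
        have := Set.mem_iInter.mp hh.2 ⟨μ l + δ, hlt⟩
        exact this l δ rfl
      obtain ⟨u, hu⟩ := (hRepClosed.isCompact).elim_finite_subfamily_closed _
        (fun γ' : {x : Fin n →₀ ℕ // Lt le x γ} => hVanClosed γ'.1) hempty
      by_cases hune : u.Nonempty
      · obtain ⟨mγ, hmem, hmax⟩ := exists_le_max hle (u.image fun γ' => γ'.1) (hune.image _)
        obtain ⟨γ'₀, hγ'₀u, hγ'₀eq⟩ := Finset.mem_image.mp hmem
        have hmγγ : Lt le mγ γ := hγ'₀eq ▸ γ'₀.2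
        have hmγν : Lt le mγ ν := lt_of_lt_of_le hle hmγγ hγν
        obtain ⟨h, hhRep, hhvan⟩ := (ih mγ hmγγ hmγν.1).2 hmγν
        have hmem2 : h ∈ RepSet ∩ ⋂ γ' ∈ u,
            {h : Fin s → MvPowerSeries (Fin n) k |
              ∀ l δ, μ l + δ = γ'.1 → MvPowerSeries.coeff δ (h l) = 0} := by
          refine ⟨hhRep, ?_⟩
          simp only [Set.mem_iInter, Set.mem_setOf_eq]
          intro γ' hγ'u l δ heq
          apply hhvan l δ
          rw [heq]
          exact hmax _ (Finset.mem_image_of_mem _ hγ'u)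
        rw [hu] at hmem2
        exact Set.notMem_empty h hmem2
      · rw [Finset.not_nonempty_iff_eq_empty] at hune
        obtain ⟨h0, hh0⟩ := hRepNe
        have hmem2 : h0 ∈ RepSet ∩ ⋂ γ' ∈ u,
            {h : Fin s → MvPowerSeries (Fin n) k |
              ∀ l δ, μ l + δ = γ'.1 → MvPowerSeries.coeff δ (h l) = 0} :=
          ⟨hh0, by rw [hune]; simp⟩
        rw [hu] at hmem2
        exact Set.notMem_empty h0 hmem2
    refine ⟨hP, fun hγlt => ?_⟩
    obtain ⟨h, hhRep, hhvan⟩ := hP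
    have hrepeq : ∑ l, h l * g l = f := hhRep
    obtain ⟨h', hrep', hvan'⟩ :=
      step hle g hμ hSel hLM hγlt _ h hrepeq hhvan (Nat.le_refl _)
    exact ⟨h', hrep', hvan'⟩
  obtain ⟨h, hhRep, hhvan⟩ := (main ν (le_refl hle ν)).1
  have hrepeq : ∑ l, h l * g l = f := hhRep
  by_contra hnone
  push_neg at hnone
  have hcoeff := coeff_combo_at hle g hμ hhvan
  apply hLM.1
  rw [← hrepeq, hcoeff]
  exact Finset.sum_eq_zero fun l _ => if_neg (hnone l)

end compactness

end S17


open S17 in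
theorem statement17
    {n s : ℕ} {k : Type*} [Field k] [Finite k]
    (le : (Fin n →₀ ℕ) → (Fin n →₀ ℕ) → Prop) (hle : IsAdditiveTotalOrder le)
    (I : Ideal (MvPowerSeries (Fin n) k)) (hI : I ≠ ⊥)
    (g : Fin s → MvPowerSeries (Fin n) k)
    (hg0 : ∀ i, g i ≠ 0) (hgI : ∀ i, g i ∈ I)
    (hgen : Ideal.span (Set.range g) = I)
    (μ : Fin s → (Fin n →₀ ℕ)) (hμ : ∀ i, IsLM le (g i) (μ i)) :
    LMset le I = (⋃ i : Fin s, {β | ∃ γ, β = μ i + γ}) ↔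
      ∀ i j : Fin s,
        ∃ q : Fin s → MvPowerSeries (Fin n) k,
          Sel (g i) (g j) (μ i) (μ j) = ∑ l, q l * g l ∧
          ∀ l, ∀ β ∈ psupp (q l), InDelta μ l (β + μ l) := by
  constructor
  · -- Gröbner basis ⟹ S-elements have remainder zero
    intro hG i j
    have hSelI : Sel (g i) (g j) (μ i) (μ j) ∈ I := by
      rw [Sel, ← smul_mul_assoc, ← smul_mul_assoc]
      exact sub_mem (Ideal.mul_mem_left I _ (hgI i)) (Ideal.mul_mem_left I _ (hgI j))
    obtain ⟨q, r, hre, hqs, hrs⟩ := division hle g μ hμ (Sel (g i) (g j) (μ i) (μ j))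
    have hrI : r ∈ I := by
      have h1 : (∑ l, q l * g l) ∈ I :=
        Submodule.sum_mem I fun l _ => Ideal.mul_mem_left I _ (hgI l)
      have h2 : r = Sel (g i) (g j) (μ i) (μ j) - ∑ l, q l * g l := by
        rw [hre]; ring
      rw [h2]
      exact sub_mem hSelI h1
    have hr0 : r = 0 := by
      by_contra hr0
      obtain ⟨ν, hLMr⟩ := exists_isLM hle hr0
      have hνmem : ν ∈ LMset le I := ⟨r, hrI, hLMr⟩
      rw [hG] at hνmem
      obtain ⟨l, γ, hγ⟩ := Set.mem_iUnion.mp hνmem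
      exact hrs ν hLMr.1 l ⟨γ, hγ⟩
    refine ⟨q, ?_, hqs⟩
    rw [hre, hr0, add_zero]
  · -- S-elements have remainder zero ⟹ Gröbner basis
    intro hSel
    ext ν
    constructor
    · rintro ⟨f, hfI, hLMf⟩
      rw [← hgen] at hfI
      obtain ⟨l, hl⟩ := lm_in_cone hle g hμ hSel hfI hLMf
      obtain ⟨γ, hγ⟩ := le_iff_exists_add.mp hl
      exact Set.mem_iUnion.mpr ⟨l, γ, hγ⟩
    · intro hν
      obtain ⟨i, γ, hγ⟩ := Set.mem_iUnion.mp hν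
      refine ⟨MvPowerSeries.monomial γ 1 * g i, Ideal.mul_mem_left I _ (hgI i), ?_⟩
      rw [hγ, add_comm]
      exact isLM_monomial_mul hle (hμ i) γ
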